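/- Assume γ > 1, γ ≠ 3 (equivalently ℓ ≠ 1), and λ ∈ ℝ. Then with V₅ := ℓ/(1−ℓ) = 2/(γ−3) and C₅ := 1/|ℓ−1|, the points P₅ := (V₅, C₅) and P₆ := (V₅, −C₅) are critical points of the reduced similarity ODE: F(V₅, ±C₅) = 0 and G(V₅, ±C₅) = 0. Moreover C₅ = |1 + V₅|, so that P₅ and P₆ lie on the union of the critical lines L_± := {C = ±(1+V)}. -/

import Mathlib

noncomputable def ell (γ : ℝ) : ℝ := 2 / (γ - 1)
noncomputable def Vstar (γ lam : ℝ) : ℝ := ell γ * (1 - lam)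
noncomputable def k1 (γ lam : ℝ) : ℝ := (1 / ell γ - 1) * (lam - 1)
noncomputable def k0 (γ lam : ℝ) : ℝ := (lam - 1) / ell γ
noncomputable def Dfun (V C : ℝ) : ℝ := (1 + V) ^ 2 - C ^ 2
noncomputable def Gfun (γ lam V C : ℝ) : ℝ :=
  C ^ 2 * (V - Vstar γ lam) - V * (1 + V) * (lam + V)
noncomputable def Ffun (γ lam V C : ℝ) : ℝ :=
  C * (C ^ 2 - (1 + V) ^ 2 + k1 γ lam * (1 + V) - k0 γ lam)

/-- for `γ ≠ 3` the points `P₅ = (V₅, C₅)` and `P₆ = (V₅, −C₅)` with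
`V₅ = ℓ/(1−ℓ) = 2/(γ−3)`, `C₅ = 1/|ℓ−1|` are critical points, and they lie on the
union of the critical lines `L_± = {C = ±(1+V)}`. -/
theorem stmt_5 (γ lam : ℝ) (hγ : 1 < γ) (hγ3 : γ ≠ 3) :
    let V5 : ℝ := ell γ / (1 - ell γ)
    let C5 : ℝ := 1 / |ell γ - 1|
    (ell γ ≠ 1) ∧ V5 = 2 / (γ - 3) ∧
    Ffun γ lam V5 C5 = 0 ∧ Gfun γ lam V5 C5 = 0 ∧
    Ffun γ lam V5 (-C5) = 0 ∧ Gfun γ lam V5 (-C5) = 0 ∧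
    C5 = |1 + V5| := by
  intro V5 C5
  have hγ1 : γ - 1 ≠ 0 := sub_ne_zero.mpr (ne_of_gt hγ)
  have hℓ : ell γ ≠ 0 := by
    simp only [ell]
    positivity
  have hℓ1 : ell γ ≠ 1 := by
    intro h
    apply hγ3
    have : 2 = γ - 1 := by
      simp only [ell] at h
      rw [div_eq_one_iff_eq hγ1] at h
      linarith
    linarith
  have h1ℓ : 1 - ell γ ≠ 0 := sub_ne_zero.mpr (Ne.symm hℓ1)
  have hℓ1' : ell γ - 1 ≠ 0 := sub_ne_zero.mpr hℓ1
  have habs : |ell γ - 1| ≠ 0 := abs_ne_zero.mpr hℓ1'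
  have hC2 : C5 ^ 2 = 1 / (ell γ - 1) ^ 2 := by
    simp only [C5, div_pow, one_pow, sq_abs]
  have h1V : 1 + V5 = 1 / (1 - ell γ) := by
    simp only [V5]
    rw [eq_div_iff h1ℓ, add_mul, div_mul_cancel₀ _ h1ℓ]
    ring
  have hV5 : V5 = 2 / (γ - 3) := by
    have hγ3' : γ - 3 ≠ 0 := sub_ne_zero.mpr hγ3
    have hden : (1:ℝ) - 2/(γ-1) ≠ 0 := h1ℓ
    simp only [V5, ell]
    rw [div_eq_div_iff hden hγ3']
    field_simp
    ring
  refine ⟨hℓ1, hV5, ?_, ?_, ?_, ?_, ?_⟩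
  · simp only [Ffun]
    have : C5 ^ 2 - (1 + V5) ^ 2 + k1 γ lam * (1 + V5) - k0 γ lam = 0 := by
      rw [hC2, h1V]
      simp only [k1, k0, V5]
      field_simp
      ring
    rw [this, mul_zero]
  · simp only [Gfun]
    rw [hC2]
    simp only [Vstar, V5]
    field_simp
    ring
  · simp only [Ffun]
    have : (-C5) ^ 2 - (1 + V5) ^ 2 + k1 γ lam * (1 + V5) - k0 γ lam = 0 := by
      rw [neg_pow, hC2, h1V]
      simp only [k1, k0, V5]
      field_simp
      ring
    rw [this, mul_zero]
  · simp only [Gfun]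
    rw [neg_pow, hC2]
    simp only [Vstar, V5]
    field_simp
    ring
  · rw [h1V, abs_div, abs_one, abs_sub_comm]
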